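/- Let (Ω, 𝓕, P) be a probability space, H a random variable with H > 0 P-a.s. and E[H] < ∞, E[H^q] < ∞, E[H^{1+α}] < ∞, where q ∈ [0,1) and α ∈ (q−1, 0]. Let K ≥ 0 and let d : (0,∞) → ℝ be a measurable function with |d(z)| ≤ K(1 + z^α) for all z > 0. Let λ > 0 and set G := E[H·d(λH)] and x := G + λ^{q−1}·E[H^q]. Then |G| ≤ K(E[H] + λ^α·E[H^{1+α}]) ≤ K(E[H] + (x − G)^{α/(q−1)}·E[H]^{1−α/(q−1)}). -/

import Mathlib

open MeasureTheory
open scoped ENNReal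

section aux

lemma turnpike_aux_pos
    {Ω : Type*} [MeasurableSpace Ω] (P : Measure Ω) [IsProbabilityMeasure P]
    (f : Ω → ℝ) (hf : ∀ᵐ ω ∂P, 0 < f ω) (hInt : Integrable f P) :
    0 < ∫ ω, f ω ∂P := by
  rw [integral_pos_iff_support_of_nonneg_ae (hf.mono fun ω h => h.le) hInt]
  have h1 : P (Function.support f)ᶜ = 0 := by
    have : (Function.support f)ᶜ = {ω | ¬ f ω ≠ 0} := by
      rw [Function.support, Set.compl_setOf]
    rw [this, ← ae_iff]
    filter_upwards [hf] with ω hω using ne_of_gt hω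
  calc (0 : ℝ≥0∞) < 1 := by norm_num
    _ = P Set.univ := (measure_univ).symm
    _ ≤ P (Function.support f) + P (Function.support f)ᶜ := by
        rw [← Set.union_compl_self (Function.support f)]; exact measure_union_le _ _
    _ = P (Function.support f) := by rw [h1, add_zero]

lemma turnpike_holder_interp
    {Ω : Type*} [MeasurableSpace Ω] (P : Measure Ω) [IsProbabilityMeasure P]
    (H : Ω → ℝ) (hHpos : ∀ᵐ ω ∂P, 0 < H ω)
    (q θ : ℝ) (hθ0 : 0 < θ) (hθ1 : θ < 1)
    (hInt1 : Integrable H P)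
    (hIntq : Integrable (fun ω => H ω ^ q) P) :
    ∫ ω, H ω ^ (q * θ + (1 - θ)) ∂P ≤
      (∫ ω, H ω ^ q ∂P) ^ θ * (∫ ω, H ω ∂P) ^ (1 - θ) := by
  have hθ1' : 0 < 1 - θ := by linarith
  have hpq : Real.HolderConjugate (1/θ) (1/(1-θ)) := by
    constructor
    · rw [one_div, one_div, inv_inv, inv_inv, inv_one]; ring
    · exact one_div_pos.mpr hθ0
    · exact one_div_pos.mpr hθ1'
  have hf : MemLp (fun ω => H ω ^ (q * θ)) (ENNReal.ofReal (1/θ)) P := by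
    have h2 := (memLp_one_iff_integrable.mpr hIntq).norm_rpow_div (ENNReal.ofReal θ)
    have h3 : (1 : ℝ≥0∞) / ENNReal.ofReal θ = ENNReal.ofReal (1/θ) := by
      rw [one_div, one_div, ENNReal.ofReal_inv_of_pos hθ0]
    rw [h3] at h2
    refine MemLp.ae_eq ?_ h2
    filter_upwards [hHpos] with ω hω
    rw [ENNReal.toReal_ofReal hθ0.le, Real.norm_of_nonneg (Real.rpow_nonneg hω.le _),
      ← Real.rpow_mul hω.le]
  have hg : MemLp (fun ω => H ω ^ (1 - θ)) (ENNReal.ofReal (1/(1-θ))) P := by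
    have h2 := (memLp_one_iff_integrable.mpr hInt1).norm_rpow_div (ENNReal.ofReal (1-θ))
    have h3 : (1 : ℝ≥0∞) / ENNReal.ofReal (1-θ) = ENNReal.ofReal (1/(1-θ)) := by
      rw [one_div, one_div, ENNReal.ofReal_inv_of_pos hθ1']
    rw [h3] at h2
    refine MemLp.ae_eq ?_ h2
    filter_upwards [hHpos] with ω hω
    rw [ENNReal.toReal_ofReal hθ1'.le, Real.norm_of_nonneg hω.le]
  have hfnn : 0 ≤ᵐ[P] fun ω => H ω ^ (q * θ) := by
    filter_upwards [hHpos] with ω hω using Real.rpow_nonneg hω.le _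
  have hgnn : 0 ≤ᵐ[P] fun ω => H ω ^ (1 - θ) := by
    filter_upwards [hHpos] with ω hω using Real.rpow_nonneg hω.le _
  have key := integral_mul_le_Lp_mul_Lq_of_nonneg hpq hfnn hgnn hf hg
  have e1 : ∫ ω, (fun ω => H ω ^ (q * θ)) ω * (fun ω => H ω ^ (1 - θ)) ω ∂P
      = ∫ ω, H ω ^ (q * θ + (1 - θ)) ∂P := by
    refine integral_congr_ae ?_
    filter_upwards [hHpos] with ω hω
    rw [← Real.rpow_add hω]
  have e2 : ∫ ω, (fun ω => H ω ^ (q * θ)) ω ^ (1/θ) ∂P = ∫ ω, H ω ^ q ∂P := by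
    refine integral_congr_ae ?_
    filter_upwards [hHpos] with ω hω
    rw [← Real.rpow_mul hω.le]
    congr 1
    field_simp
  have e3 : ∫ ω, (fun ω => H ω ^ (1 - θ)) ω ^ (1/(1-θ)) ∂P = ∫ ω, H ω ∂P := by
    refine integral_congr_ae ?_
    filter_upwards [hHpos] with ω hω
    rw [← Real.rpow_mul hω.le, mul_one_div, div_self (ne_of_gt hθ1'), Real.rpow_one]
  rw [e1, e2, e3, one_div_one_div, one_div_one_div] at key
  exact key

end aux

/-- Single-horizon inequality at the heart of Proposition 3.2: with
`G = E[H·d(λH)]` and `x = G + λ^{q-1}·E[H^q]`, one has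
`|G| ≤ K(E[H] + λ^α E[H^{1+α}]) ≤ K(E[H] + (x-G)^{α/(q-1)} E[H]^{1-α/(q-1)})`. -/
theorem turnpike_single_horizon_bound
    {Ω : Type*} [MeasurableSpace Ω] (P : Measure Ω) [IsProbabilityMeasure P]
    (H : Ω → ℝ) (hHmeas : Measurable H) (hHpos : ∀ᵐ ω ∂P, 0 < H ω)
    (q α : ℝ) (hq0 : 0 ≤ q) (hq1 : q < 1) (hα1 : q - 1 < α) (hα2 : α ≤ 0)
    (hInt1 : Integrable H P)
    (hIntq : Integrable (fun ω => H ω ^ q) P)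
    (hIntα : Integrable (fun ω => H ω ^ (1 + α)) P)
    (K : ℝ) (hK : 0 ≤ K)
    (d : ℝ → ℝ) (hdmeas : Measurable d)
    (hd : ∀ z : ℝ, 0 < z → |d z| ≤ K * (1 + z ^ α))
    (lam : ℝ) (hlam : 0 < lam)
    (G x : ℝ)
    (hG : G = ∫ ω, H ω * d (lam * H ω) ∂P)
    (hx : x = G + lam ^ (q - 1) * ∫ ω, H ω ^ q ∂P) :
    |G| ≤ K * ((∫ ω, H ω ∂P) + lam ^ α * ∫ ω, H ω ^ (1 + α) ∂P) ∧
    K * ((∫ ω, H ω ∂P) + lam ^ α * ∫ ω, H ω ^ (1 + α) ∂P) ≤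
      K * ((∫ ω, H ω ∂P) +
        (x - G) ^ (α / (q - 1)) * (∫ ω, H ω ∂P) ^ (1 - α / (q - 1))) := by
  set A := ∫ ω, H ω ∂P with hA
  set B := ∫ ω, H ω ^ q ∂P with hB
  set C := ∫ ω, H ω ^ (1 + α) ∂P with hC
  have hq1' : q - 1 < 0 := by linarith
  have hBpos : 0 < B := turnpike_aux_pos P _
    (hHpos.mono fun ω h => Real.rpow_pos_of_pos h q) hIntq
  -- pointwise bound function
  set g : Ω → ℝ := fun ω => K * H ω + K * lam ^ α * H ω ^ (1 + α) with hg
  have hgInt : Integrable g P := (hInt1.const_mul K).add (hIntα.const_mul (K * lam ^ α))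
  have hbound : ∀ᵐ ω ∂P, ‖H ω * d (lam * H ω)‖ ≤ g ω := by
    filter_upwards [hHpos] with ω hω
    have hlH : 0 < lam * H ω := mul_pos hlam hω
    rw [norm_mul, Real.norm_of_nonneg hω.le]
    calc H ω * ‖d (lam * H ω)‖ ≤ H ω * (K * (1 + (lam * H ω) ^ α)) := by
          exact mul_le_mul_of_nonneg_left (hd _ hlH) hω.le
      _ = g ω := by
          rw [Real.mul_rpow hlam.le hω.le]
          have : H ω * H ω ^ α = H ω ^ (1 + α) := by
            rw [Real.rpow_add hω, Real.rpow_one]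
          simp only [hg]
          rw [← this]
          ring
  have hφmeas : AEStronglyMeasurable (fun ω => H ω * d (lam * H ω)) P :=
    (hHmeas.mul (hdmeas.comp (measurable_const.mul hHmeas))).aestronglyMeasurable
  have hφInt : Integrable (fun ω => H ω * d (lam * H ω)) P :=
    hgInt.mono' hφmeas hbound
  have hgval : ∫ ω, g ω ∂P = K * (A + lam ^ α * C) := by
    simp only [hg]
    rw [integral_add (hInt1.const_mul K) (hIntα.const_mul (K * lam ^ α)),
      integral_const_mul, integral_const_mul, ← hA, ← hC]
    ring
  constructor
  · calc |G| = ‖∫ ω, H ω * d (lam * H ω) ∂P‖ := by rw [hG, Real.norm_eq_abs]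
      _ ≤ ∫ ω, ‖H ω * d (lam * H ω)‖ ∂P := norm_integral_le_integral_norm _
      _ ≤ ∫ ω, g ω ∂P := integral_mono_ae hφInt.norm hgInt hbound
      _ = K * (A + lam ^ α * C) := hgval
  · set θ := α / (q - 1) with hθdef
    have hqne : q - 1 ≠ 0 := ne_of_lt hq1'
    have hθ0 : 0 ≤ θ := div_nonneg_of_nonpos hα2 hq1'.le
    have hθ1 : θ < 1 := by
      rw [hθdef, div_lt_iff_of_neg hq1']
      linarith
    have hmul : (q - 1) * θ = α := by
      rw [hθdef]
      field_simp
    have hxG : x - G = lam ^ (q - 1) * B := by rw [hx]; ring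
    have hApos : 0 < A := turnpike_aux_pos P _ hHpos hInt1
    have hkey : C ≤ B ^ θ * A ^ (1 - θ) := by
      rcases eq_or_lt_of_le hθ0 with hθz | hθp
      · have hα0 : α = 0 := by
          have := hmul
          rw [← hθz, mul_zero] at this
          linarith
        have hCA : C = A := by
          rw [hC, hA, hα0]
          norm_num
        rw [← hθz, hCA]
        simp
      · have key := turnpike_holder_interp P H hHpos q θ hθp hθ1 hInt1 hIntq
        have heq : q * θ + (1 - θ) = 1 + α := by
          rw [← hmul]; ring
        rw [heq] at key
        exact key
    have hrw : (x - G) ^ θ = lam ^ α * B ^ θ := by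
      rw [hxG, Real.mul_rpow (Real.rpow_nonneg hlam.le _) hBpos.le,
        ← Real.rpow_mul hlam.le, hmul]
    apply mul_le_mul_of_nonneg_left _ hK
    apply add_le_add_right
    rw [hrw, mul_assoc]
    exact mul_le_mul_of_nonneg_left hkey (Real.rpow_pos_of_pos hlam α).le
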